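/- Let T : X → X be a continuous map of a compact metric space, (ν_n)_{n≥0} a sequence of Borel probability measures on X, and A ⊆ ℕ a set of asymptotic density zero such that ν_{n+1} = T_* ν_n for all n ∉ A. Then every weak-* limit point of the Cesàro averages (1/m) Σ_{n=0}^{m−1} ν_n is a T-invariant probability measure. -/

import Mathlib

open MeasureTheory Filter

/-- Lemma 4.7: Let `T` be a continuous map of a compact metric space,
`(ν_n)` Borel probability measures with `ν_{n+1} = T_* ν_n` for `n` outside a set `A` of
asymptotic density zero. Then any weak-* limit point of the Cesàro averages
`(1/m) Σ_{n<m} ν_n` is a `T`-invariant probability measure. -/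
theorem stmt_12 {X : Type*} [MetricSpace X] [CompactSpace X]
    [MeasurableSpace X] [BorelSpace X]
    (T : X → X) (hT : Continuous T) (ν : ℕ → Measure X)
    (hν : ∀ n, IsProbabilityMeasure (ν n)) (A : Set ℕ)
    (hA : Tendsto (fun m : ℕ =>
      (∑ n ∈ Finset.range m, A.indicator (fun _ => (1 : ℝ)) n) / (m : ℝ)) atTop (nhds 0))
    (hmap : ∀ n ∉ A, ν (n + 1) = Measure.map T (ν n))
    (μ : Measure X) (φ : ℕ → ℕ) (hφ : StrictMono φ)
    (hconv : ∀ f : X → ℝ, Continuous f →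
      Tendsto (fun k : ℕ =>
          ∫ x, f x ∂(((φ k : ENNReal))⁻¹ • ∑ n ∈ Finset.range (φ k), ν n))
        atTop (nhds (∫ x, f x ∂μ))) :
    IsProbabilityMeasure μ ∧ Measure.map T μ = μ := by
  haveI := hν
  have hφtop : Tendsto φ atTop atTop := hφ.tendsto_atTop
  -- inverse of m tends to 0
  have hinv : Tendsto (fun m : ℕ => (m : ℝ)⁻¹) atTop (nhds 0) :=
    tendsto_inv_atTop_zero.comp tendsto_natCast_atTop_atTop
  -- μ is a probability measure
  have hprob : IsProbabilityMeasure μ := by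
    have h1 := hconv (fun _ => (1 : ℝ)) continuous_const
    have heq : ∀ᶠ k in atTop,
        (∫ _x, (1 : ℝ) ∂(((φ k : ENNReal))⁻¹ • ∑ n ∈ Finset.range (φ k), ν n)) = 1 := by
      filter_upwards [hφtop.eventually_ge_atTop 1] with k hk
      have hm0 : (φ k : ENNReal) ≠ 0 := by
        exact_mod_cast Nat.cast_ne_zero.mpr (by omega)
      have huniv : (((φ k : ENNReal))⁻¹ • ∑ n ∈ Finset.range (φ k), ν n) Set.univ = 1 := by
        rw [Measure.smul_apply, Measure.finset_sum_apply]
        simp only [measure_univ, Finset.sum_const, Finset.card_range, nsmul_eq_mul, mul_one]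
        rw [smul_eq_mul]
        exact ENNReal.inv_mul_cancel hm0 (ENNReal.natCast_ne_top _)
      rw [integral_const, measureReal_def, huniv]
      simp
    have h2 : Tendsto (fun k : ℕ =>
        ∫ _x, (1 : ℝ) ∂(((φ k : ENNReal))⁻¹ • ∑ n ∈ Finset.range (φ k), ν n)) atTop (nhds 1) :=
      (tendsto_congr' heq).mpr tendsto_const_nhds
    have h3 : (∫ _x, (1 : ℝ) ∂μ) = 1 := tendsto_nhds_unique h1 h2
    rw [integral_const, smul_eq_mul, mul_one] at h3
    exact ⟨(ENNReal.toReal_eq_one_iff _).mp h3⟩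
  -- averaging identity
  have havg : ∀ (f : X → ℝ), (∀ n, Integrable f (ν n)) → ∀ m : ℕ,
      ∫ x, f x ∂(((m : ENNReal))⁻¹ • ∑ n ∈ Finset.range m, ν n)
        = (m : ℝ)⁻¹ * ∑ n ∈ Finset.range m, ∫ x, f x ∂ν n := by
    intro f hf m
    rw [integral_smul_measure, integral_finset_sum_measure (fun i _ => hf i)]
    simp [ENNReal.toReal_inv, smul_eq_mul]
  -- key invariance of integrals
  have key : ∀ h : BoundedContinuousFunction X ℝ, ∫ x, h (T x) ∂μ = ∫ x, h x ∂μ := by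
    intro h
    set g : BoundedContinuousFunction X ℝ := h.compContinuous ⟨T, hT⟩ with hg
    have hgx : ∀ x, g x = h (T x) := fun x => rfl
    set a : ℕ → ℝ := fun n => ∫ x, h x ∂ν n with ha
    set b : ℕ → ℝ := fun n => ∫ x, h (T x) ∂ν n with hb
    have hbg : ∀ n, b n = ∫ x, g x ∂ν n := fun n => by simp [hb, hgx]
    have hb_eq : ∀ n ∉ A, b n = a (n + 1) := by
      intro n hn
      have e1 : a (n + 1) = ∫ x, h x ∂(Measure.map T (ν n)) := by simp only [ha]; rw [hmap n hn]
      rw [e1, integral_map hT.aemeasurable h.continuous.aestronglyMeasurable]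
    have habound : ∀ n, |a n| ≤ ‖h‖ := fun n => h.norm_integral_le_norm (ν n)
    have hbbound : ∀ n, |b n| ≤ ‖h‖ := by
      intro n
      rw [hbg n]
      calc |∫ x, g x ∂ν n| ≤ ‖g‖ := g.norm_integral_le_norm (ν n)
        _ ≤ ‖h‖ := h.norm_compContinuous_le _
    have hbound : ∀ n, |b n - a (n + 1)| ≤ 2 * ‖h‖ * A.indicator (fun _ => (1 : ℝ)) n := by
      intro n
      by_cases hn : n ∈ A
      · rw [Set.indicator_of_mem hn]
        calc |b n - a (n + 1)| ≤ |b n| + |a (n + 1)| := abs_sub _ _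
          _ ≤ ‖h‖ + ‖h‖ := add_le_add (hbbound n) (habound (n + 1))
          _ = 2 * ‖h‖ * 1 := by ring
      · rw [Set.indicator_of_notMem hn, hb_eq n hn]; simp
    set S : ℕ → ℝ := fun m => ∑ n ∈ Finset.range m, A.indicator (fun _ => (1 : ℝ)) n with hS
    have hsum : ∀ m : ℕ, |∑ n ∈ Finset.range m, (b n - a n)| ≤ 2 * ‖h‖ + 2 * ‖h‖ * S m := by
      intro m
      have e : ∀ n, b n - a n = (a (n + 1) - a n) + (b n - a (n + 1)) := fun n => by ring
      calc |∑ n ∈ Finset.range m, (b n - a n)|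
          = |(a m - a 0) + ∑ n ∈ Finset.range m, (b n - a (n + 1))| := by
            simp_rw [e]; rw [Finset.sum_add_distrib, Finset.sum_range_sub]
        _ ≤ |a m - a 0| + |∑ n ∈ Finset.range m, (b n - a (n + 1))| := abs_add_le _ _
        _ ≤ 2 * ‖h‖ + 2 * ‖h‖ * S m := by
            refine add_le_add ?_ ?_
            · calc |a m - a 0| ≤ |a m| + |a 0| := abs_sub _ _
                _ ≤ ‖h‖ + ‖h‖ := add_le_add (habound m) (habound 0)
                _ = 2 * ‖h‖ := by ring
            · calc |∑ n ∈ Finset.range m, (b n - a (n + 1))|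
                  ≤ ∑ n ∈ Finset.range m, |b n - a (n + 1)| := Finset.abs_sum_le_sum_abs _ _
                _ ≤ ∑ n ∈ Finset.range m, 2 * ‖h‖ * A.indicator (fun _ => (1 : ℝ)) n :=
                    Finset.sum_le_sum (fun n _ => hbound n)
                _ = 2 * ‖h‖ * S m := by rw [hS, Finset.mul_sum]
    have hDk : Tendsto (fun m : ℕ => (m : ℝ)⁻¹ * ∑ n ∈ Finset.range m, (b n - a n))
        atTop (nhds 0) := by
      apply squeeze_zero_norm
        (a := fun m : ℕ => 2 * ‖h‖ * (m : ℝ)⁻¹ + 2 * ‖h‖ * (S m / m))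
      · intro m
        have hm0 : (0 : ℝ) ≤ (m : ℝ)⁻¹ := by positivity
        calc ‖(m : ℝ)⁻¹ * ∑ n ∈ Finset.range m, (b n - a n)‖
            = (m : ℝ)⁻¹ * |∑ n ∈ Finset.range m, (b n - a n)| := by
              rw [Real.norm_eq_abs, abs_mul, abs_of_nonneg hm0]
          _ ≤ (m : ℝ)⁻¹ * (2 * ‖h‖ + 2 * ‖h‖ * S m) := by
              exact mul_le_mul_of_nonneg_left (hsum m) hm0
          _ = 2 * ‖h‖ * (m : ℝ)⁻¹ + 2 * ‖h‖ * (S m / m) := by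
              rw [div_eq_mul_inv]; ring
      · have t1 : Tendsto (fun m : ℕ => 2 * ‖h‖ * (m : ℝ)⁻¹) atTop (nhds 0) := by
          simpa using hinv.const_mul (2 * ‖h‖)
        have t2 : Tendsto (fun m : ℕ => 2 * ‖h‖ * (S m / m)) atTop (nhds 0) := by
          simpa using hA.const_mul (2 * ‖h‖)
        simpa using t1.add t2
    have hD : Tendsto (fun k : ℕ => ((φ k : ℝ))⁻¹ * ∑ n ∈ Finset.range (φ k), (b n - a n))
        atTop (nhds 0) := hDk.comp hφtop
    have hint_h : ∀ n, Integrable (fun x => h x) (ν n) := fun n => h.integrable (ν n)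
    have hint_g : ∀ n, Integrable (fun x => h (T x)) (ν n) := fun n => g.integrable (ν n)
    have hfk : Tendsto (fun k : ℕ => ((φ k : ℝ))⁻¹ * ∑ n ∈ Finset.range (φ k), a n)
        atTop (nhds (∫ x, h x ∂μ)) := by
      have := hconv (fun x => h x) h.continuous
      simpa only [havg (fun x => h x) hint_h] using this
    have hgk : Tendsto (fun k : ℕ => ((φ k : ℝ))⁻¹ * ∑ n ∈ Finset.range (φ k), b n)
        atTop (nhds (∫ x, h (T x) ∂μ)) := by
      have := hconv (fun x => h (T x)) (h.continuous.comp hT)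
      simpa only [havg (fun x => h (T x)) hint_g] using this
    have hsub : Tendsto (fun k : ℕ => ((φ k : ℝ))⁻¹ * ∑ n ∈ Finset.range (φ k), (b n - a n))
        atTop (nhds ((∫ x, h (T x) ∂μ) - ∫ x, h x ∂μ)) := by
      have := hgk.sub hfk
      simpa only [Finset.sum_sub_distrib, mul_sub] using this
    have := tendsto_nhds_unique hsub hD
    linarith [this]
  refine ⟨hprob, ?_⟩
  haveI : IsProbabilityMeasure (Measure.map T μ) := Measure.isProbabilityMeasure_map hT.aemeasurable
  apply ext_of_forall_lintegral_eq_of_IsFiniteMeasure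
  intro f
  have hcont : Continuous (fun x => (f x : ℝ)) := NNReal.continuous_coe.comp f.continuous
  have hint1 : Integrable (fun x => (f x : ℝ)) (Measure.map T μ) :=
    BoundedContinuousFunction.integrable_of_nnreal _ f
  have hint2 : Integrable (fun x => (f x : ℝ)) μ :=
    BoundedContinuousFunction.integrable_of_nnreal _ f
  rw [lintegral_coe_eq_integral f hint1, lintegral_coe_eq_integral f hint2]
  congr 1
  rw [integral_map hT.aemeasurable hcont.aestronglyMeasurable]
  exact key (BoundedContinuousFunction.mkOfCompact ⟨fun x => (f x : ℝ), hcont⟩)
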